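/- Define f : ℂ⁴ → ℝ by f(z₁,z₂,z₃,z₄) = (3 + 6|z₁|² + 10|z₂|² + 5|z₃|² + 9|z₄|² + 12·|z₁z₄ − z₂z₃|²) / (1 + |z₁|² + |z₂|² + |z₃|² + |z₄|² + |z₁z₄ − z₂z₃|²). Then f is differentiable as a function on ℝ⁸ ≅ ℂ⁴, and its (real) Fréchet derivative vanishes at a point z if and only if z = 0; i.e. z = 0 is the unique critical point of f. -/

import Mathlib

/-- The composition `h ∘ μ` of the moment map of `G₄,₂` with the linear function
`h(x) = x₁ + 2x₂ + 4x₃ + 8x₄`, written in the Plücker chart `M₁₂ ≅ ℂ⁴`: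
`f(z₁,z₂,z₃,z₄) = (3 + 6|z₁|² + 10|z₂|² + 5|z₃|² + 9|z₄|² + 12|z₁z₄ − z₂z₃|²) /
(1 + |z₁|² + |z₂|² + |z₃|² + |z₄|² + |z₁z₄ − z₂z₃|²)`. -/
noncomputable def morseChart (z : Fin 4 → ℂ) : ℝ :=
  (3 + 6 * ‖z 0‖ ^ 2 + 10 * ‖z 1‖ ^ 2 + 5 * ‖z 2‖ ^ 2 + 9 * ‖z 3‖ ^ 2 +
      12 * ‖z 0 * z 3 - z 1 * z 2‖ ^ 2) /
    (1 + ‖z 0‖ ^ 2 + ‖z 1‖ ^ 2 + ‖z 2‖ ^ 2 + ‖z 3‖ ^ 2 + ‖z 0 * z 3 - z 1 * z 2‖ ^ 2)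

open Complex ContinuousLinearMap

set_option synthInstance.maxHeartbeats 1000000
set_option maxHeartbeats 1000000

noncomputable section MorseAux

def mcPrj (i : Fin 4) : (Fin 4 → ℂ) →L[ℝ] ℂ := ContinuousLinearMap.proj i

def mcPl (z : Fin 4 → ℂ) : ℂ := z 0 * z 3 - z 1 * z 2

def mcDpl (z : Fin 4 → ℂ) : (Fin 4 → ℂ) →L[ℝ] ℂ :=
  (z 0 • mcPrj 3 + z 3 • mcPrj 0) - (z 1 • mcPrj 2 + z 2 • mcPrj 1)

lemma mcPl_hasFDerivAt (z : Fin 4 → ℂ) : HasFDerivAt mcPl (mcDpl z) z :=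
  ((mcPrj 0).hasFDerivAt.mul (mcPrj 3).hasFDerivAt).sub
    ((mcPrj 1).hasFDerivAt.mul (mcPrj 2).hasFDerivAt)

def mcDsq (z : Fin 4 → ℂ) (i : Fin 4) : (Fin 4 → ℂ) →L[ℝ] ℝ :=
  2 • (innerSL ℝ (z i)).comp (mcPrj i)

lemma mcDsq_hasFDerivAt (z : Fin 4 → ℂ) (i : Fin 4) :
    HasFDerivAt (fun z : Fin 4 → ℂ => ‖z i‖ ^ 2) (mcDsq z i) z :=
  (mcPrj i).hasFDerivAt.norm_sq

def mcDp2 (z : Fin 4 → ℂ) : (Fin 4 → ℂ) →L[ℝ] ℝ :=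
  2 • (innerSL ℝ (mcPl z)).comp (mcDpl z)

lemma mcDp2_hasFDerivAt (z : Fin 4 → ℂ) :
    HasFDerivAt (fun z => ‖mcPl z‖ ^ 2) (mcDp2 z) z :=
  (mcPl_hasFDerivAt z).norm_sq

def mcNum (z : Fin 4 → ℂ) : ℝ :=
  3 + 6 * ‖z 0‖ ^ 2 + 10 * ‖z 1‖ ^ 2 + 5 * ‖z 2‖ ^ 2 + 9 * ‖z 3‖ ^ 2 + 12 * ‖mcPl z‖ ^ 2

def mcDen (z : Fin 4 → ℂ) : ℝ :=
  1 + ‖z 0‖ ^ 2 + ‖z 1‖ ^ 2 + ‖z 2‖ ^ 2 + ‖z 3‖ ^ 2 + ‖mcPl z‖ ^ 2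

def mcDnum (z : Fin 4 → ℂ) : (Fin 4 → ℂ) →L[ℝ] ℝ :=
  (6 : ℝ) • mcDsq z 0 + (10 : ℝ) • mcDsq z 1 + (5 : ℝ) • mcDsq z 2 + (9 : ℝ) • mcDsq z 3
    + (12 : ℝ) • mcDp2 z

def mcDden (z : Fin 4 → ℂ) : (Fin 4 → ℂ) →L[ℝ] ℝ :=
  mcDsq z 0 + mcDsq z 1 + mcDsq z 2 + mcDsq z 3 + mcDp2 z

lemma mcNum_hasFDerivAt (z : Fin 4 → ℂ) : HasFDerivAt mcNum (mcDnum z) z :=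
  ((((((mcDsq_hasFDerivAt z 0).const_mul (6:ℝ)).const_add 3).add
    ((mcDsq_hasFDerivAt z 1).const_mul (10:ℝ))).add
    ((mcDsq_hasFDerivAt z 2).const_mul (5:ℝ))).add
    ((mcDsq_hasFDerivAt z 3).const_mul (9:ℝ))).add
    ((mcDp2_hasFDerivAt z).const_mul (12:ℝ))

lemma mcDen_hasFDerivAt (z : Fin 4 → ℂ) : HasFDerivAt mcDen (mcDden z) z :=
  (((((mcDsq_hasFDerivAt z 0).const_add 1).add
    (mcDsq_hasFDerivAt z 1)).add (mcDsq_hasFDerivAt z 2)).add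
    (mcDsq_hasFDerivAt z 3)).add (mcDp2_hasFDerivAt z)

lemma mcDen_pos (z : Fin 4 → ℂ) : 0 < mcDen z := by
  have := sq_nonneg ‖z 0‖; have := sq_nonneg ‖z 1‖; have := sq_nonneg ‖z 2‖
  have := sq_nonneg ‖z 3‖; have := sq_nonneg ‖mcPl z‖
  unfold mcDen; linarith

def mcL (z : Fin 4 → ℂ) : (Fin 4 → ℂ) →L[ℝ] ℝ :=
  mcNum z • ((-(mcDen z ^ 2)⁻¹) • mcDden z) + (mcDen z)⁻¹ • mcDnum z

lemma morseChart_hasFDerivAt (z : Fin 4 → ℂ) : HasFDerivAt morseChart (mcL z) z := by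
  have hinv : HasFDerivAt (fun z => (mcDen z)⁻¹) ((-(mcDen z ^ 2)⁻¹) • mcDden z) z :=
    (hasDerivAt_inv (mcDen_pos z).ne').comp_hasFDerivAt z (mcDen_hasFDerivAt z)
  have h := (mcNum_hasFDerivAt z).mul hinv
  have heq : morseChart = fun z => mcNum z * (mcDen z)⁻¹ := by
    funext y
    rw [morseChart, div_eq_mul_inv]; rfl
  rw [heq]
  exact h

lemma mcL_apply (z w : Fin 4 → ℂ) :
    mcL z w = mcNum z * (-(mcDen z ^ 2)⁻¹ * mcDden z w) + (mcDen z)⁻¹ * mcDnum z w := by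
  simp [mcL]

lemma crit_eqs (z : Fin 4 → ℂ) (hz : fderiv ℝ morseChart z = 0) (w : Fin 4 → ℂ) :
    mcDen z * mcDnum z w = mcNum z * mcDden z w := by
  have hL : mcL z = 0 := by rw [← (morseChart_hasFDerivAt z).fderiv, hz]
  have h0 : mcL z w = 0 := by rw [hL]; rfl
  rw [mcL_apply] at h0
  have hd := (mcDen_pos z).ne'
  field_simp at h0
  have h1 : (mcDen z * mcDnum z w - mcNum z * mcDden z w) * mcDen z = 0 := by
    linear_combination mcDen z * h0
  rcases mul_eq_zero.mp h1 with h2 | h2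
  · linarith
  · exact absurd h2 hd

/-- The key algebraic lemma: the four complex critical-point equations force `z = 0`. -/
lemma mcCore (z0 z1 z2 z3 : ℂ) (nn dd : ℝ)
    (hnn : nn = 3 + 6 * normSq z0 + 10 * normSq z1 + 5 * normSq z2 + 9 * normSq z3
      + 12 * normSq (z0 * z3 - z1 * z2))
    (hdd : dd = 1 + normSq z0 + normSq z1 + normSq z2 + normSq z3
      + normSq (z0 * z3 - z1 * z2))
    (h1 : ((6*dd-nn : ℝ):ℂ) * z0
      + ((12*dd-nn:ℝ):ℂ) * (z0*z3-z1*z2) * (starRingEnd ℂ) z3 = 0)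
    (h2 : ((10*dd-nn:ℝ):ℂ) * z1
      - ((12*dd-nn:ℝ):ℂ) * (z0*z3-z1*z2) * (starRingEnd ℂ) z2 = 0)
    (h3 : ((5*dd-nn:ℝ):ℂ) * z2
      - ((12*dd-nn:ℝ):ℂ) * (z0*z3-z1*z2) * (starRingEnd ℂ) z1 = 0)
    (h4 : ((9*dd-nn:ℝ):ℂ) * z3
      + ((12*dd-nn:ℝ):ℂ) * (z0*z3-z1*z2) * (starRingEnd ℂ) z0 = 0) :
    z0 = 0 ∧ z1 = 0 ∧ z2 = 0 ∧ z3 = 0 := by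
  have n0 := normSq_nonneg z0
  have n1 := normSq_nonneg z1
  have n2 := normSq_nonneg z2
  have n3 := normSq_nonneg z3
  have nP := normSq_nonneg (z0 * z3 - z1 * z2)
  have hdd_pos : 0 < dd := by rw [hdd]; linarith
  have hA_pos : (0:ℝ) < 12*dd - nn := by rw [hnn, hdd]; nlinarith
  have key : ∀ (r : ℝ) (v : ℂ), (r:ℂ) * v = 0 → v ≠ 0 → r = 0 := by
    intro r v h hv
    rcases mul_eq_zero.mp h with h | h
    · exact_mod_cast h
    · exact absurd h hv
  by_cases hP : z0 * z3 - z1 * z2 = 0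
  · simp only [hP, mul_zero, zero_mul, add_zero, sub_zero] at h1 h2 h3 h4
    simp only [hP, normSq_zero] at hnn hdd
    have e0 : z0 = 0 := by
      by_contra h
      have k6 := key _ _ h1 h
      have e1 : z1 = 0 := by
        by_contra h'; have := key _ _ h2 h'; linarith
      have e2 : z2 = 0 := by
        by_contra h'; have := key _ _ h3 h'; linarith
      have e3 : z3 = 0 := by
        by_contra h'; have := key _ _ h4 h'; linarith
      rw [e1, e2, e3] at hnn hdd
      simp only [normSq_zero] at hnn hdd
      linarith
    have e1 : z1 = 0 := by
      by_contra h
      have k10 := key _ _ h2 h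
      have e2 : z2 = 0 := by
        by_contra h'; have := key _ _ h3 h'; linarith
      have e3 : z3 = 0 := by
        by_contra h'; have := key _ _ h4 h'; linarith
      rw [e0, e2, e3] at hnn hdd
      simp only [normSq_zero] at hnn hdd
      linarith
    have e2 : z2 = 0 := by
      by_contra h
      have k5 := key _ _ h3 h
      have e3 : z3 = 0 := by
        by_contra h'; have := key _ _ h4 h'; linarith
      rw [e0, e1, e3] at hnn hdd
      simp only [normSq_zero] at hnn hdd
      linarith
    have e3 : z3 = 0 := by
      by_contra h
      have k9 := key _ _ h4 h
      rw [e0, e1, e2] at hnn hdd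
      simp only [normSq_zero] at hnn hdd
      linarith
    exact ⟨e0, e1, e2, e3⟩
  · -- P ≠ 0
    have hAC : ((12*dd-nn:ℝ):ℂ) ≠ 0 := by
      exact_mod_cast hA_pos.ne'
    have key2 : ∀ v : ℂ, ((12*dd-nn:ℝ):ℂ) * (z0*z3-z1*z2) * v = 0 → v = 0 := by
      intro v h
      rcases mul_eq_zero.mp h with h | h
      · rcases mul_eq_zero.mp h with h | h
        · exact absurd h hAC
        · exact absurd h hP
      · exact h
    have h03 : z0 = 0 → z3 = 0 := by
      intro h0
      have hv : ((12*dd-nn:ℝ):ℂ) * (z0*z3-z1*z2) * (starRingEnd ℂ) z3 = 0 := by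
        linear_combination h1 - ((6*dd-nn:ℝ):ℂ) * h0
      have := key2 _ hv
      simpa using this
    have h30 : z3 = 0 → z0 = 0 := by
      intro h0
      have hv : ((12*dd-nn:ℝ):ℂ) * (z0*z3-z1*z2) * (starRingEnd ℂ) z0 = 0 := by
        linear_combination h4 - ((9*dd-nn:ℝ):ℂ) * h0
      have := key2 _ hv
      simpa using this
    have h12 : z1 = 0 → z2 = 0 := by
      intro h0
      have hv : ((12*dd-nn:ℝ):ℂ) * (z0*z3-z1*z2) * (starRingEnd ℂ) z2 = 0 := by
        linear_combination ((10*dd-nn:ℝ):ℂ) * h0 - h2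
      have := key2 _ hv
      simpa using this
    have h21 : z2 = 0 → z1 = 0 := by
      intro h0
      have hv : ((12*dd-nn:ℝ):ℂ) * (z0*z3-z1*z2) * (starRingEnd ℂ) z1 = 0 := by
        linear_combination ((5*dd-nn:ℝ):ℂ) * h0 - h3
      have := key2 _ hv
      simpa using this
    by_cases hz0 : z0 = 0 <;> by_cases hz1 : z1 = 0
    · exact absurd (by rw [hz0, hz1]; ring) hP
    · -- z0 = 0, z1 ≠ 0
      exfalso
      have hz3 := h03 hz0
      have hz2 : z2 ≠ 0 := fun h => hz1 (h21 h)
      have hc2 : z2 * (starRingEnd ℂ) z2 = (normSq z2 : ℂ) := Complex.mul_conj z2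
      have h2' := h2; push_cast at h2'
      have hq : ((10*(dd:ℂ)-nn) + (12*(dd:ℂ)-nn) * (normSq z2 : ℂ)) * z1 = 0 := by
        linear_combination h2' + (12*(dd:ℂ)-nn) * z3 * (starRingEnd ℂ) z2 * hz0
          - (12*(dd:ℂ)-nn) * z1 * hc2
      have hr : (10*dd-nn) + (12*dd-nn) * normSq z2 = 0 := by
        rcases mul_eq_zero.mp hq with h | h
        · exact_mod_cast h
        · exact absurd h hz1
      rw [hz0, hz3] at hnn hdd
      simp only [normSq_zero, mul_zero, zero_mul, zero_sub, normSq_neg, normSq_mul] at hnn hdd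
      nlinarith [normSq_nonneg z2, sq_nonneg (normSq z2)]
    · -- z0 ≠ 0, z1 = 0
      exfalso
      have hz2 := h12 hz1
      have hz3 : z3 ≠ 0 := fun h => hz0 (h30 h)
      have hc3 : z3 * (starRingEnd ℂ) z3 = (normSq z3 : ℂ) := Complex.mul_conj z3
      have h1' := h1; push_cast at h1'
      have hq : ((6*(dd:ℂ)-nn) + (12*(dd:ℂ)-nn) * (normSq z3 : ℂ)) * z0 = 0 := by
        linear_combination h1' + (12*(dd:ℂ)-nn) * z2 * (starRingEnd ℂ) z3 * hz1
          - (12*(dd:ℂ)-nn) * z0 * hc3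
      have hr : (6*dd-nn) + (12*dd-nn) * normSq z3 = 0 := by
        rcases mul_eq_zero.mp hq with h | h
        · exact_mod_cast h
        · exact absurd h hz0
      rw [hz1, hz2] at hnn hdd
      simp only [normSq_zero, mul_zero, zero_mul, sub_zero, normSq_mul] at hnn hdd
      nlinarith [normSq_nonneg z3, sq_nonneg (normSq z3)]
    · -- all nonzero
      exfalso
      have hz3 : z3 ≠ 0 := fun h => hz0 (h30 h)
      have hz2 : z2 ≠ 0 := fun h => hz1 (h21 h)
      have hPc : (z0*z3-z1*z2) *
          ((starRingEnd ℂ) z0 * (starRingEnd ℂ) z3 - (starRingEnd ℂ) z1 * (starRingEnd ℂ) z2)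
            = (normSq (z0*z3-z1*z2) : ℂ) := by
        have := Complex.mul_conj (z0*z3-z1*z2)
        simpa [map_sub, map_mul] using this
      have h1' := h1; have h2' := h2; have h3' := h3; have h4' := h4
      push_cast at h1' h2' h3' h4'
      have hPc2 : (z0*z3-z1*z2) * (starRingEnd ℂ) (z0*z3-z1*z2)
          = (normSq (z0*z3-z1*z2) : ℂ) := Complex.mul_conj _
      have h4c : (9*(dd:ℂ)-nn) * (starRingEnd ℂ) z3
          + (12*(dd:ℂ)-nn) *
            ((starRingEnd ℂ) z0 * (starRingEnd ℂ) z3 - (starRingEnd ℂ) z1 * (starRingEnd ℂ) z2)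
            * z0 = 0 := by
        have := congrArg (starRingEnd ℂ) h4'
        simp only [map_add, map_mul, map_sub, map_zero, map_ofNat, Complex.conj_conj,
          Complex.conj_ofReal] at this
        linear_combination this
      have h3c : (5*(dd:ℂ)-nn) * (starRingEnd ℂ) z2
          - (12*(dd:ℂ)-nn) *
            ((starRingEnd ℂ) z0 * (starRingEnd ℂ) z3 - (starRingEnd ℂ) z1 * (starRingEnd ℂ) z2)
            * z1 = 0 := by
        have := congrArg (starRingEnd ℂ) h3'
        simp only [map_add, map_mul, map_sub, map_zero, map_ofNat, Complex.conj_conj,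
          Complex.conj_ofReal] at this
        linear_combination this
      have R1c : ((6*(dd:ℂ)-nn)*(9*(dd:ℂ)-nn)) * (z0 * (starRingEnd ℂ) z3)
          = ((12*(dd:ℂ)-nn)^2 * (normSq (z0*z3-z1*z2) : ℂ)) * (z0 * (starRingEnd ℂ) z3) := by
        linear_combination (9*(dd:ℂ)-nn) * (starRingEnd ℂ) z3 * h1'
          - (12*(dd:ℂ)-nn) * (z0*z3-z1*z2) * (starRingEnd ℂ) z3 * h4c
          + (12*(dd:ℂ)-nn)^2 * z0 * (starRingEnd ℂ) z3 * hPc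
      have R2c : ((10*(dd:ℂ)-nn)*(5*(dd:ℂ)-nn)) * (z1 * (starRingEnd ℂ) z2)
          = ((12*(dd:ℂ)-nn)^2 * (normSq (z0*z3-z1*z2) : ℂ)) * (z1 * (starRingEnd ℂ) z2) := by
        linear_combination (5*(dd:ℂ)-nn) * (starRingEnd ℂ) z2 * h2'
          + (12*(dd:ℂ)-nn) * (z0*z3-z1*z2) * (starRingEnd ℂ) z2 * h3c
          + (12*(dd:ℂ)-nn)^2 * z1 * (starRingEnd ℂ) z2 * hPc
      have hne1 : z0 * (starRingEnd ℂ) z3 ≠ 0 :=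
        mul_ne_zero hz0 (by simpa using hz3)
      have hne2 : z1 * (starRingEnd ℂ) z2 ≠ 0 :=
        mul_ne_zero hz1 (by simpa using hz2)
      have R1 : (6*dd-nn)*(9*dd-nn) = (12*dd-nn)^2 * normSq (z0*z3-z1*z2) := by
        have := mul_right_cancel₀ hne1 R1c
        exact_mod_cast this
      have R2 : (10*dd-nn)*(5*dd-nn) = (12*dd-nn)^2 * normSq (z0*z3-z1*z2) := by
        have := mul_right_cancel₀ hne2 R2c
        exact_mod_cast this
      have h4d : 4 * dd^2 = 0 := by linear_combination R1 - R2
      nlinarith [hdd_pos]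

end MorseAux


/-- `f = h ∘ μ` is differentiable as a real function on `ℂ⁴ ≅ ℝ⁸`, and its
real Fréchet derivative vanishes at a point `z` if and only if `z = 0`; i.e. `z = 0` is the
unique critical point of `f`. -/
theorem morseChart_differentiable_and_critical_iff_zero :
    Differentiable ℝ morseChart ∧
    ∀ z : Fin 4 → ℂ, fderiv ℝ morseChart z = 0 ↔ z = 0 := by
  constructor
  · exact fun z => (morseChart_hasFDerivAt z).differentiableAt
  · intro z
    constructor
    · intro hz
      have hnn : mcNum z = 3 + 6 * normSq ((starRingEnd ℂ) (z 0))
          + 10 * normSq ((starRingEnd ℂ) (z 1)) + 5 * normSq ((starRingEnd ℂ) (z 2))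
          + 9 * normSq ((starRingEnd ℂ) (z 3))
          + 12 * normSq ((starRingEnd ℂ) (z 0) * (starRingEnd ℂ) (z 3)
            - (starRingEnd ℂ) (z 1) * (starRingEnd ℂ) (z 2)) := by
        simp only [← map_mul, ← map_sub, normSq_conj]
        simp [mcNum, mcPl, Complex.sq_norm]
      have hdd : mcDen z = 1 + normSq ((starRingEnd ℂ) (z 0))
          + normSq ((starRingEnd ℂ) (z 1)) + normSq ((starRingEnd ℂ) (z 2))
          + normSq ((starRingEnd ℂ) (z 3))
          + normSq ((starRingEnd ℂ) (z 0) * (starRingEnd ℂ) (z 3)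
            - (starRingEnd ℂ) (z 1) * (starRingEnd ℂ) (z 2)) := by
        simp only [← map_mul, ← map_sub, normSq_conj]
        simp [mcDen, mcPl, Complex.sq_norm]
      have eq1 : ((6 * mcDen z - mcNum z : ℝ) : ℂ) * (starRingEnd ℂ) (z 0)
          + ((12 * mcDen z - mcNum z : ℝ) : ℂ) * (starRingEnd ℂ) (mcPl z) * z 3 = 0 := by
        have E1 := crit_eqs z hz (Pi.single 0 1)
        have EI := crit_eqs z hz (Pi.single 0 Complex.I)
        simp [mcDnum, mcDden, mcDsq, mcDp2, mcDpl, mcPrj, Pi.single_apply] at E1 EI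
        rw [Complex.ext_iff]
        constructor
        · simp [Complex.mul_re]
          linear_combination E1 / 2
        · simp [Complex.mul_im]
          linear_combination -EI / 2
      have eq2 : ((10 * mcDen z - mcNum z : ℝ) : ℂ) * (starRingEnd ℂ) (z 1)
          - ((12 * mcDen z - mcNum z : ℝ) : ℂ) * (starRingEnd ℂ) (mcPl z) * z 2 = 0 := by
        have E1 := crit_eqs z hz (Pi.single 1 1)
        have EI := crit_eqs z hz (Pi.single 1 Complex.I)
        simp [mcDnum, mcDden, mcDsq, mcDp2, mcDpl, mcPrj, Pi.single_apply] at E1 EI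
        rw [Complex.ext_iff]
        constructor
        · simp [Complex.mul_re]
          linear_combination E1 / 2
        · simp [Complex.mul_im]
          linear_combination -EI / 2
      have eq3 : ((5 * mcDen z - mcNum z : ℝ) : ℂ) * (starRingEnd ℂ) (z 2)
          - ((12 * mcDen z - mcNum z : ℝ) : ℂ) * (starRingEnd ℂ) (mcPl z) * z 1 = 0 := by
        have E1 := crit_eqs z hz (Pi.single 2 1)
        have EI := crit_eqs z hz (Pi.single 2 Complex.I)
        simp [mcDnum, mcDden, mcDsq, mcDp2, mcDpl, mcPrj, Pi.single_apply] at E1 EI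
        rw [Complex.ext_iff]
        constructor
        · simp [Complex.mul_re]
          linear_combination E1 / 2
        · simp [Complex.mul_im]
          linear_combination -EI / 2
      have eq4 : ((9 * mcDen z - mcNum z : ℝ) : ℂ) * (starRingEnd ℂ) (z 3)
          + ((12 * mcDen z - mcNum z : ℝ) : ℂ) * (starRingEnd ℂ) (mcPl z) * z 0 = 0 := by
        have E1 := crit_eqs z hz (Pi.single 3 1)
        have EI := crit_eqs z hz (Pi.single 3 Complex.I)
        simp [mcDnum, mcDden, mcDsq, mcDp2, mcDpl, mcPrj, Pi.single_apply] at E1 EI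
        rw [Complex.ext_iff]
        constructor
        · simp [Complex.mul_re]
          linear_combination E1 / 2
        · simp [Complex.mul_im]
          linear_combination -EI / 2
      obtain ⟨e0, e1, e2, e3⟩ := mcCore ((starRingEnd ℂ) (z 0)) ((starRingEnd ℂ) (z 1))
        ((starRingEnd ℂ) (z 2)) ((starRingEnd ℂ) (z 3)) (mcNum z) (mcDen z) hnn hdd
        (by simpa [mcPl, map_sub, map_mul] using eq1)
        (by simpa [mcPl, map_sub, map_mul] using eq2)
        (by simpa [mcPl, map_sub, map_mul] using eq3)
        (by simpa [mcPl, map_sub, map_mul] using eq4)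
      have f0 : z 0 = 0 := by simpa using e0
      have f1 : z 1 = 0 := by simpa using e1
      have f2 : z 2 = 0 := by simpa using e2
      have f3 : z 3 = 0 := by simpa using e3
      funext i
      fin_cases i <;> assumption
    · intro hz
      subst hz
      have hL0 : mcL 0 = 0 := by
        ext w
        simp [mcL, mcDnum, mcDden, mcDsq, mcDp2, mcDpl, mcPl, mcPrj]
      rw [(morseChart_hasFDerivAt 0).fderiv, hL0]
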